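/- arXiv:0705.0984 — 4 statements merged into one kernel-verified Lean document; each statement's English description precedes it below -/
import Mathlib

section
/- The raising and lowering operators on the graded graph of weakly decreasing integer vectors commute. Precisely: for any two vectors μ, λ in W̄_d = {(λ_1,...,λ_d) ∈ ℤ^d : λ_1 ≥ ... ≥ λ_d}, the number of two-step walks μ → μ+e_i → μ+e_i−e_j = λ with all intermediate vectors in W̄_d (where e_i are standard basis vectors) equals the number of two-step walks μ → μ−e_j → μ−e_j+e_i = λ with intermediates in W̄_d. -/
open scoped Classical

lemma antitone_iff_adj {d : ℕ} (f : Fin d → ℤ) :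
    Antitone f ↔ ∀ (k : ℕ) (h : k + 1 < d), f ⟨k + 1, h⟩ ≤ f ⟨k, by omega⟩ := by
  constructor
  · intro hf k h
    exact hf (by simp [Fin.le_def])
  · intro h a b hab
    obtain ⟨n, hn⟩ : ∃ n, b.val = a.val + n := ⟨b.val - a.val, by omega⟩
    clear hab
    induction n generalizing b with
    | zero =>
      have : b = a := Fin.ext (by omega)
      simp [this]
    | succ n ih =>
      have hbl : (b : ℕ) < d := b.isLt
      have hb' : a.val + n < d := by omega
      have h1 : f b ≤ f ⟨a.val + n, hb'⟩ := by
        have h2 := h (a.val + n) (by omega)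
        have hb : b = ⟨a.val + n + 1, by omega⟩ := Fin.ext (by simp only [Fin.val_mk]; omega)
        rw [hb]
        exact h2
      refine h1.trans ?_
      exact ih (b := ⟨a.val + n, hb'⟩) rfl

def condA {d : ℕ} (μ : Fin d → ℤ) (i : Fin d) : Prop :=
  ∀ k : Fin d, k.val + 1 = i.val → μ i < μ k

lemma antitone_add_single_iff {d : ℕ} {μ : Fin d → ℤ} (hμ : Antitone μ) (i : Fin d) :
    Antitone (μ + Pi.single i 1) ↔ condA μ i := by
  rw [antitone_iff_adj]
  constructor
  · intro h k hk
    have hlt : k.val + 1 < d := hk ▸ i.isLt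
    have this1 := h k.val hlt
    have e1 : (⟨k.val + 1, hlt⟩ : Fin d) = i := Fin.ext (by simpa using hk)
    have e2 : (⟨k.val, by omega⟩ : Fin d) = k := Fin.ext rfl
    rw [e1, e2] at this1
    have hki : ¬ (k = i) := by
      intro hh; rw [hh] at hk; omega
    simp only [Pi.add_apply, Pi.single_apply, if_pos rfl, if_neg hki, if_true] at this1
    omega
  · intro h k hk
    simp only [Pi.add_apply, Pi.single_apply]
    have hadj : μ ⟨k + 1, hk⟩ ≤ μ ⟨k, by omega⟩ := hμ (by simp [Fin.le_def])
    by_cases hi : (⟨k + 1, hk⟩ : Fin d) = i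
    · have h2 : ¬ ((⟨k, by omega⟩ : Fin d) = i) := by
        intro hh
        have l1 := congrArg Fin.val hh
        have l2 := congrArg Fin.val hi
        simp only [Fin.val_mk] at l1 l2; omega
      simp only [if_pos hi, if_neg h2]
      have hval : (k : ℕ) + 1 = i.val := by
        have := congrArg Fin.val hi; simpa using this
      have h3 := h ⟨k, by omega⟩ hval
      have h4 := congrArg μ hi
      omega
    · simp only [if_neg hi]
      split_ifs <;> omega

def condB {d : ℕ} (μ : Fin d → ℤ) (j : Fin d) : Prop :=
  ∀ k : Fin d, k.val = j.val + 1 → μ k < μ j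

lemma antitone_sub_single_iff {d : ℕ} {μ : Fin d → ℤ} (hμ : Antitone μ) (j : Fin d) :
    Antitone (μ - Pi.single j 1) ↔ condB μ j := by
  rw [antitone_iff_adj]
  constructor
  · intro h k hk
    have hj1 : j.val + 1 < d := by have := k.isLt; omega
    have this1 := h j.val hj1
    have e1 : (⟨j.val + 1, hj1⟩ : Fin d) = k := Fin.ext (by simpa using hk.symm)
    have e2 : (⟨j.val, by omega⟩ : Fin d) = j := Fin.ext rfl
    rw [e1, e2] at this1
    have hkj : ¬ (k = j) := by
      intro hh; rw [hh] at hk; omega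
    simp only [Pi.sub_apply, Pi.single_apply, if_pos rfl, if_neg hkj, if_true] at this1
    omega
  · intro h k hk
    simp only [Pi.sub_apply, Pi.single_apply]
    have hadj : μ ⟨k + 1, hk⟩ ≤ μ ⟨k, by omega⟩ := hμ (by simp [Fin.le_def])
    by_cases hj : (⟨k, by omega⟩ : Fin d) = j
    · have h2 : ¬ ((⟨k + 1, hk⟩ : Fin d) = j) := by
        intro hh
        have l1 := congrArg Fin.val hh
        have l2 := congrArg Fin.val hj
        simp only [Fin.val_mk] at l1 l2; omega
      simp only [if_pos hj, if_neg h2]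
      have hval : (k : ℕ) + 1 = j.val + 1 := by
        have := congrArg Fin.val hj; simp only [Fin.val_mk] at this; omega
      have h3 := h ⟨k + 1, hk⟩ (by simpa using hval)
      have h4 := congrArg μ hj
      omega
    · simp only [if_neg hj]
      split_ifs <;> omega

lemma single_eq_single {d : ℕ} {i j : Fin d}
    (h : (Pi.single i 1 : Fin d → ℤ) = Pi.single j 1) : i = j := by
  have hh := congrFun h i
  simp only [Pi.single_apply, if_pos rfl] at hh
  by_contra hij
  rw [if_neg hij] at hh
  norm_num at hh

lemma cardAB {d : ℕ} {μ : Fin d → ℤ} (hμ : Antitone μ) :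
    (Finset.univ.filter (condA μ)).card = (Finset.univ.filter (condB μ)).card := by
  have hc : (Finset.univ.filter (fun i => ¬ condA μ i)).card =
      (Finset.univ.filter (fun j => ¬ condB μ j)).card := by
    apply Finset.card_bij (fun i _ => (⟨i.val - 1, by have := i.isLt; omega⟩ : Fin d))
    · intro a ha
      rw [Finset.mem_filter] at ha ⊢
      simp only [Finset.mem_filter, Finset.mem_univ, true_and, condA, condB] at ha ⊢
      push_neg at ha ⊢
      obtain ⟨k, hk1, hk2⟩ := ha
      have hke : (⟨a.val - 1, by have := a.isLt; omega⟩ : Fin d) = k :=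
        Fin.ext (by simp only [Fin.val_mk]; omega)
      have hv : ((⟨a.val - 1, by have := a.isLt; omega⟩ : Fin d) : ℕ) = a.val - 1 := rfl
      refine ⟨a, by omega, ?_⟩
      rw [hke]; exact hk2
    · intro a1 ha1 a2 ha2 h
      rw [Finset.mem_filter] at ha1 ha2
      simp only [Finset.mem_filter, Finset.mem_univ, true_and, condA] at ha1 ha2
      push_neg at ha1 ha2
      obtain ⟨k1, hk1, _⟩ := ha1
      obtain ⟨k2, hk2, _⟩ := ha2
      have := congrArg Fin.val h
      simp only [Fin.val_mk] at this
      exact Fin.ext (by omega)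
    · intro b hb
      rw [Finset.mem_filter] at hb
      simp only [Finset.mem_filter, Finset.mem_univ, true_and, condB] at hb
      push_neg at hb
      obtain ⟨k, hk1, hk2⟩ := hb
      refine ⟨k, ?_, ?_⟩
      · rw [Finset.mem_filter]
        simp only [Finset.mem_filter, Finset.mem_univ, true_and, condA]
        push_neg
        exact ⟨b, by omega, hk2⟩
      · exact Fin.ext (by simp only [Fin.val_mk]; omega)
  have h1 := Finset.card_filter_add_card_filter_not (s := (Finset.univ : Finset (Fin d)))
    (p := condA μ)
  have h2 := Finset.card_filter_add_card_filter_not (s := (Finset.univ : Finset (Fin d)))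
    (p := condB μ)
  omega

/-- On the graded graph of weakly decreasing integer vectors of length `d`,
the raising and lowering operators commute: for any weakly decreasing `μ, λ`, the number
of two-step up-down walks `μ → μ+eᵢ → μ+eᵢ−eⱼ = λ` (intermediate in `W̄_d`) equals the
number of two-step down-up walks `μ → μ−eⱼ → μ−eⱼ+eᵢ = λ`. -/
theorem stmt0 {d : ℕ} (μ lam : Fin d → ℤ) (hμ : Antitone μ) (hlam : Antitone lam) :
    (Finset.univ.filter (fun p : Fin d × Fin d =>
        Antitone (μ + Pi.single p.1 1) ∧
        μ + Pi.single p.1 1 - Pi.single p.2 1 = lam)).card =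
    (Finset.univ.filter (fun p : Fin d × Fin d =>
        Antitone (μ - Pi.single p.1 1) ∧
        μ - Pi.single p.1 1 + Pi.single p.2 1 = lam)).card := by
  by_cases hml : lam = μ
  · subst hml
    have hS1 : (Finset.univ.filter (fun p : Fin d × Fin d =>
        Antitone (lam + Pi.single p.1 1) ∧
        lam + Pi.single p.1 1 - Pi.single p.2 1 = lam)) =
        (Finset.univ.filter (condA lam)).image (fun i => (i, i)) := by
      ext p
      rcases p with ⟨a, b⟩
      simp only [Finset.mem_filter, Finset.mem_univ, true_and, Finset.mem_image]
      constructor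
      · rintro ⟨h1, h2⟩
        rw [sub_eq_iff_eq_add, add_right_inj] at h2
        have heq : a = b := single_eq_single h2
        subst heq
        exact ⟨a, (antitone_add_single_iff hlam a).1 h1, rfl⟩
      · rintro ⟨i, hi, hii⟩
        simp only [Prod.mk.injEq] at hii
        obtain ⟨rfl, rfl⟩ := hii
        exact ⟨(antitone_add_single_iff hlam i).2 hi, by abel⟩
    have hS2 : (Finset.univ.filter (fun p : Fin d × Fin d =>
        Antitone (lam - Pi.single p.1 1) ∧
        lam - Pi.single p.1 1 + Pi.single p.2 1 = lam)) =
        (Finset.univ.filter (condB lam)).image (fun i => (i, i)) := by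
      ext p
      rcases p with ⟨a, b⟩
      simp only [Finset.mem_filter, Finset.mem_univ, true_and, Finset.mem_image]
      constructor
      · rintro ⟨h1, h2⟩
        rw [sub_add_eq_add_sub, sub_eq_iff_eq_add, add_right_inj] at h2
        have heq : b = a := single_eq_single h2
        subst heq
        exact ⟨b, (antitone_sub_single_iff hlam b).1 h1, rfl⟩
      · rintro ⟨i, hi, hii⟩
        simp only [Prod.mk.injEq] at hii
        obtain ⟨rfl, rfl⟩ := hii
        exact ⟨(antitone_sub_single_iff hlam i).2 hi, by abel⟩
    rw [hS1, hS2,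
      Finset.card_image_of_injective _ (fun x y h => (Prod.ext_iff.mp h).1),
      Finset.card_image_of_injective _ (fun x y h => (Prod.ext_iff.mp h).1)]
    exact cardAB hlam
  · have key1 : ∀ i j : Fin d, μ + Pi.single i 1 - Pi.single j 1 = lam →
        Antitone (μ + Pi.single i 1) := by
      intro i j heq
      have hij : i ≠ j := by
        rintro rfl
        apply hml
        rw [← heq]; abel
      rw [antitone_add_single_iff hμ]
      intro k hk
      have hki : ¬ (k = i) := by intro hh; rw [hh] at hk; omega
      have h1 := congrFun heq i
      have h2 := congrFun heq k
      simp only [Pi.sub_apply, Pi.add_apply, Pi.single_apply, if_pos rfl, if_true,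
        if_neg hij, if_neg hki] at h1 h2
      have hle : lam i ≤ lam k := hlam (by rw [Fin.le_def]; omega)
      split_ifs at h2 <;> omega
    have key2 : ∀ i j : Fin d, μ + Pi.single i 1 - Pi.single j 1 = lam →
        Antitone (μ - Pi.single j 1) := by
      intro i j heq
      have hij : i ≠ j := by
        rintro rfl
        apply hml
        rw [← heq]; abel
      rw [antitone_sub_single_iff hμ]
      intro k hk
      have hkj : ¬ (k = j) := by intro hh; rw [hh] at hk; omega
      have hji : ¬ (j = i) := fun hh => hij hh.symm
      have h1 := congrFun heq j
      have h2 := congrFun heq k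
      simp only [Pi.sub_apply, Pi.add_apply, Pi.single_apply, if_pos rfl, if_true,
        if_neg hji, if_neg hkj] at h1 h2
      have hle : lam k ≤ lam j := hlam (by rw [Fin.le_def]; omega)
      split_ifs at h2 <;> omega
    apply Finset.card_bij (fun p _ => (p.2, p.1))
    · intro p hp
      simp only [Finset.mem_filter, Finset.mem_univ, true_and] at hp ⊢
      obtain ⟨h1, h2⟩ := hp
      have h2' : μ - Pi.single p.2 1 + Pi.single p.1 1 = lam := by rw [← h2]; abel
      exact ⟨key2 p.1 p.2 h2, h2'⟩
    · intro p1 _ p2 _ h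
      simp only [Prod.mk.injEq] at h
      exact Prod.ext h.2 h.1
    · intro q hq
      simp only [Finset.mem_filter, Finset.mem_univ, true_and] at hq
      obtain ⟨h1, h2⟩ := hq
      have h2' : μ + Pi.single q.2 1 - Pi.single q.1 1 = lam := by rw [← h2]; abel
      refine ⟨(q.2, q.1), ?_, rfl⟩
      simp only [Finset.mem_filter, Finset.mem_univ, true_and]
      exact ⟨key1 q.2 q.1 h2', h2'⟩
end

section
/- For μ ≠ λ in W̄_d, the map sending the up-down walk μ ↗ μ+e_i ↘ μ+e_i−e_j = λ to the down-up walk μ ↘ μ−e_j ↗ μ−e_j+e_i = λ is a bijection between up-down walks and down-up walks from μ to λ in the graph of weakly decreasing integer vectors of length d. -/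
private lemma key {d : ℕ} (μ lam : Fin d → ℤ) (i j : Fin d) (hij : i ≠ j)
    (hμ : Antitone μ) (hlam : Antitone lam)
    (heq : μ + Pi.single i 1 - Pi.single j 1 = lam) :
    Antitone (μ + Pi.single i 1) ∧ Antitone (μ - Pi.single j 1) := by
  have hpt : ∀ a, lam a = μ a + (if a = i then (1:ℤ) else 0) - (if a = j then 1 else 0) := by
    intro a
    have := congrFun heq a
    simpa [Pi.single_apply] using this.symm
  constructor <;>
  · intro a b hab
    have h1 := hμ hab
    have h2 := hlam hab
    rw [hpt a, hpt b] at h2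
    simp only [Pi.add_apply, Pi.sub_apply, Pi.single_apply]
    split_ifs at h2 ⊢ <;> omega

/-- For `μ ≠ λ` weakly decreasing, the swap map `(i,j) ↦ (j,i)` is a bijection
from up-down walks `μ ↗ μ+eᵢ ↘ μ+eᵢ−eⱼ = λ` to down-up walks `μ ↘ μ−eⱼ ↗ μ−eⱼ+eᵢ = λ`
in the graph of weakly decreasing integer vectors of length `d`. -/
theorem stmt1 {d : ℕ} (μ lam : Fin d → ℤ) (hμ : Antitone μ) (hlam : Antitone lam)
    (hne : μ ≠ lam) :
    Set.BijOn Prod.swap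
      {p : Fin d × Fin d | Antitone (μ + Pi.single p.1 1) ∧
        μ + Pi.single p.1 1 - Pi.single p.2 1 = lam}
      {p : Fin d × Fin d | Antitone (μ - Pi.single p.1 1) ∧
        μ - Pi.single p.1 1 + Pi.single p.2 1 = lam} := by
  refine ⟨?_, Prod.swap_injective.injOn, ?_⟩
  · rintro ⟨i, j⟩ ⟨h1, h2⟩
    have hij : i ≠ j := by
      rintro rfl
      apply hne
      rw [← h2, add_sub_cancel_right]
    have := (key μ lam i j hij hμ hlam h2).2
    exact ⟨this, by rw [sub_add_eq_add_sub]; exact h2⟩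
  · rintro ⟨j, i⟩ ⟨h1, h2⟩
    have hij : i ≠ j := by
      rintro rfl
      apply hne
      rw [← h2, sub_add_cancel]
    have heq : μ + Pi.single i 1 - Pi.single j 1 = lam := by
      rw [← h2, sub_add_eq_add_sub]
    have := (key μ lam i j hij hμ hlam heq).1
    exact ⟨⟨i, j⟩, ⟨this, heq⟩, rfl⟩
end

section
/- Assuming the raising and lowering operators on W_d commute, the total number of N-step nearest-neighbor walks from μ to λ in W_d, where N = 2n + k with k = r(λ) − r(μ) ≥ 0, equals (2n+k choose n) times the number of walks from μ to λ following any fixed word W_n with n letters L and n+k letters R. -/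
/-- Nearest-neighbor adjacency on the Weyl lattice `W_d` of strictly decreasing
integer vectors. -/
def adjW (d : ℕ) (u v : Fin d → ℤ) : Prop :=
  StrictAnti u ∧ StrictAnti v ∧
    ∃ i : Fin d, v = u + Pi.single i 1 ∨ v = u - Pi.single i 1

/-- The rank function on `W_d`: `r(λ) = Σ λᵢ − (d+1 choose 2)`. -/
def rankW (d : ℕ) (lam : Fin d → ℤ) : ℤ := (∑ i, lam i) - (d + 1).choose 2

/-- The number `Z_d(N; μ, λ)` of `N`-step nearest-neighbor walks from `μ` to `λ`
staying in `W_d`. -/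
noncomputable def Zd (d N : ℕ) (μ lam : Fin d → ℤ) : ℕ :=
  Set.ncard {p : Fin (N + 1) → Fin d → ℤ |
    p 0 = μ ∧ p (Fin.last N) = lam ∧ ∀ k : Fin N, adjW d (p k.castSucc) (p k.succ)}

/-- The number of walks from `μ` to `λ` in `W_d` whose up/down step pattern follows the
word `w : List Bool` (`true` = up-step `R`, `false` = down-step `L`). -/
noncomputable def Zword (d : ℕ) (w : List Bool) (μ lam : Fin d → ℤ) : ℕ :=
  Set.ncard {p : Fin (w.length + 1) → Fin d → ℤ |
    p 0 = μ ∧ p (Fin.last w.length) = lam ∧ (∀ k, StrictAnti (p k)) ∧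
      ∀ k : Fin w.length, ∃ i : Fin d,
        if w.get k then p k.succ = p k.castSucc + Pi.single i 1
        else p k.succ = p k.castSucc - Pi.single i 1}

section Walk
variable {X : Type*}

def WkSet (N : ℕ) (Q : Fin N → X → X → Prop) (μ lam : X) : Set (Fin (N+1) → X) :=
  {p | p 0 = μ ∧ p (Fin.last N) = lam ∧ ∀ k : Fin N, Q k (p k.castSucc) (p k.succ)}

lemma shift_mem {N : ℕ} {Q : Fin (N+1) → X → X → Prop} {μ lam : X}
    {p : Fin (N+2) → X} (h : p ∈ WkSet (N+1) Q μ lam) :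
    (fun (j : Fin (N+1)) => p j.succ) ∈ WkSet N (fun k => Q k.succ) (p 1) lam := by
  obtain ⟨h0, hl, hs⟩ := h
  refine ⟨?_, ?_, ?_⟩
  · show p (0 : Fin (N+1)).succ = p 1
    rw [Fin.succ_zero_eq_one]
  · show p (Fin.last N).succ = lam
    rw [Fin.succ_last]; exact hl
  · intro k
    show Q k.succ (p k.castSucc.succ) (p k.succ.succ)
    rw [Fin.succ_castSucc]
    exact hs k.succ

lemma cons_mem {N : ℕ} {Q : Fin (N+1) → X → X → Prop} {μ lam t : X}
    {q : Fin (N+1) → X} (ht : Q 0 μ t) (hq : q ∈ WkSet N (fun k => Q k.succ) t lam) :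
    Fin.cons μ q ∈ WkSet (N+1) Q μ lam := by
  obtain ⟨h0, hl, hs⟩ := hq
  refine ⟨Fin.cons_zero _ _, ?_, ?_⟩
  · rw [← Fin.succ_last, Fin.cons_succ]; exact hl
  · intro k
    induction k using Fin.cases with
    | zero =>
      rw [Fin.castSucc_zero, Fin.cons_zero, Fin.cons_succ, h0]
      exact ht
    | succ i =>
      rw [← Fin.succ_castSucc, Fin.cons_succ, Fin.cons_succ]
      exact hs i

lemma wkSet_finite : ∀ (N : ℕ) (Q : Fin N → X → X → Prop),
    (∀ k u, {v | Q k u v}.Finite) → ∀ (μ lam : X), (WkSet N Q μ lam).Finite := by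
  intro N
  induction N with
  | zero =>
    intro Q hQ μ lam
    apply (Set.finite_singleton (fun _ => μ)).subset
    rintro p ⟨h0, -, -⟩
    have hp : p = fun _ => μ := funext fun j => by rw [Fin.fin_one_eq_zero j]; exact h0
    rw [hp]; exact rfl
  | succ N ih =>
    intro Q hQ μ lam
    have hT : (({μ} : Set X) ×ˢ (⋃ t ∈ {t | Q 0 μ t},
        WkSet N (fun k => Q k.succ) t lam)).Finite :=
      (Set.finite_singleton μ).prod ((hQ 0 μ).biUnion fun t _ => ih _ (fun k u => hQ k.succ u) t lam)
    have hinj : Function.Injective (fun p : Fin (N+2) → X => (p 0, fun (j : Fin (N+1)) => p j.succ)) := by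
      intro p q h
      simp only [Prod.mk.injEq] at h
      funext j
      induction j using Fin.cases with
      | zero => exact h.1
      | succ i => exact congrFun h.2 i
    apply Set.Finite.of_finite_image (f := fun p => (p 0, fun (j : Fin (N+1)) => p j.succ)) _ hinj.injOn
    apply hT.subset
    rintro _ ⟨p, hp, rfl⟩
    refine ⟨hp.1, Set.mem_biUnion (?_ : Q 0 μ (p 1)) ?_⟩
    · have := hp.2.2 0
      rwa [Fin.castSucc_zero, hp.1, Fin.succ_zero_eq_one] at this
    · exact shift_mem hp

open Classical in
lemma ncard_wkSet_zero (Q : Fin 0 → X → X → Prop) (μ lam : X) :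
    (WkSet 0 Q μ lam).ncard = if μ = lam then 1 else 0 := by
  split_ifs with h
  · subst h
    have he : WkSet 0 Q μ μ = {fun _ => μ} := by
      ext p
      constructor
      · rintro ⟨h0, -, -⟩
        exact funext fun j => by rw [Fin.fin_one_eq_zero j]; exact h0
      · rintro rfl
        exact ⟨rfl, rfl, fun k => k.elim0⟩
    rw [he, Set.ncard_singleton]
  · have he : WkSet 0 Q μ lam = ∅ := by
      ext p
      simp only [Set.mem_empty_iff_false, iff_false]
      rintro ⟨h0, hl, -⟩
      exact h (by rw [← h0, ← hl, Fin.fin_one_eq_zero (Fin.last 0)])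
    rw [he, Set.ncard_empty]

lemma natCard_sigma {ι : Type*} [Fintype ι] (f : ι → Type*) [hf : ∀ i, Finite (f i)] :
    Nat.card (Σ i, f i) = ∑ i, Nat.card (f i) := by
  haveI : ∀ i, Fintype (f i) := fun i => Fintype.ofFinite _
  rw [Nat.card_eq_fintype_card, Fintype.card_sigma]
  exact Finset.sum_congr rfl fun i _ => (Nat.card_eq_fintype_card).symm

lemma ncard_wkSet_succ (N : ℕ) (Q : Fin (N+1) → X → X → Prop)
    (hQ : ∀ (k : Fin (N+1)) u, {v | Q k u v}.Finite) (μ lam : X) :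
    (WkSet (N+1) Q μ lam).ncard =
      ∑ t ∈ (hQ 0 μ).toFinset, (WkSet N (fun k => Q k.succ) t lam).ncard := by
  classical
  have hfib : ∀ t, (WkSet N (fun k => Q k.succ) t lam).Finite :=
    fun t => wkSet_finite N _ (fun k u => hQ k.succ u) t lam
  haveI : ∀ t : (hQ 0 μ).toFinset, Finite (WkSet N (fun k => Q k.succ) (t : X) lam) :=
    fun t => (hfib t).to_subtype
  set f : (WkSet (N+1) Q μ lam) →
      Σ t : (hQ 0 μ).toFinset, (WkSet N (fun k => Q k.succ) (t : X) lam) :=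
    fun p => ⟨⟨p.1 1, by
        rw [Set.Finite.mem_toFinset]
        have := p.2.2.2 0
        rwa [Fin.castSucc_zero, p.2.1, Fin.succ_zero_eq_one] at this⟩,
      ⟨fun (j : Fin (N+1)) => p.1 j.succ, shift_mem p.2⟩⟩ with hf
  have hbij : Function.Bijective f := by
    constructor
    · intro p q h
      have h1 : p.1 0 = q.1 0 := by rw [p.2.1, q.2.1]
      have h2 : (fun (j : Fin (N+1)) => p.1 j.succ) = (fun (j : Fin (N+1)) => q.1 j.succ) :=
        congrArg (fun z : Σ t : (hQ 0 μ).toFinset,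
          (WkSet N (fun k => Q k.succ) (t : X) lam) => Subtype.val z.snd) h
      apply Subtype.ext
      funext j
      induction j using Fin.cases with
      | zero => exact h1
      | succ i => exact congrFun h2 i
    · rintro ⟨⟨t, ht⟩, ⟨q, hq⟩⟩
      rw [Set.Finite.mem_toFinset] at ht
      refine ⟨⟨Fin.cons μ q, cons_mem ht hq⟩, ?_⟩
      have h1 : (Fin.cons μ q : Fin (N+2) → X) 1 = t := by
        rw [← Fin.succ_zero_eq_one, Fin.cons_succ]; exact hq.1
      have h2 : (fun (j : Fin (N+1)) => (Fin.cons μ q : Fin (N+2) → X) j.succ) = q :=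
        funext fun j => by simp
      subst h1
      apply Sigma.ext
      · rfl
      · exact heq_of_eq (Subtype.ext h2)
  rw [← Nat.card_coe_set_eq, Nat.card_eq_of_bijective f hbij, natCard_sigma]
  rw [← Finset.sum_coe_sort ((hQ 0 μ).toFinset)
    (fun t => (WkSet N (fun k => Q k.succ) t lam).ncard)]
  exact Finset.sum_congr rfl fun t _ => Nat.card_coe_set_eq _

end Walk

section Step
variable {d : ℕ}

def stepW (d : ℕ) (b : Bool) (u v : Fin d → ℤ) : Prop :=
  StrictAnti u ∧ StrictAnti v ∧ ∃ i : Fin d,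
    if b then v = u + Pi.single i 1 else v = u - Pi.single i 1

lemma stepW_finite (d : ℕ) (b : Bool) (u : Fin d → ℤ) : {v | stepW d b u v}.Finite := by
  apply (((Set.finite_range fun i : Fin d => u + Pi.single i 1)).union
    ((Set.finite_range fun i : Fin d => u - Pi.single i 1))).subset
  rintro v ⟨-, -, i, hi⟩
  cases b <;> simp only [if_true, if_false, Bool.false_eq_true] at hi
  · exact Or.inr ⟨i, hi.symm⟩
  · exact Or.inl ⟨i, hi.symm⟩

noncomputable def stepFS (d : ℕ) (b : Bool) (u : Fin d → ℤ) : Finset (Fin d → ℤ) :=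
  (stepW_finite d b u).toFinset

lemma mem_stepFS {b : Bool} {u v : Fin d → ℤ} : v ∈ stepFS d b u ↔ stepW d b u v := by
  simp [stepFS, Set.Finite.mem_toFinset]

lemma rank_add (u : Fin d → ℤ) (i : Fin d) :
    rankW d (u + Pi.single i 1) = rankW d u + 1 := by
  unfold rankW
  have : ∑ j : Fin d, ((u + Pi.single i 1 : Fin d → ℤ)) j = (∑ j, u j) + ∑ j, Pi.single i (1:ℤ) j :=
    Finset.sum_add_distrib
  rw [this, Finset.sum_pi_single' i 1]
  simp only [Finset.mem_univ, if_true]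
  ring

lemma rank_sub (u : Fin d → ℤ) (i : Fin d) :
    rankW d (u - Pi.single i 1) = rankW d u - 1 := by
  unfold rankW
  have : ∑ j : Fin d, ((u - Pi.single i 1 : Fin d → ℤ)) j = (∑ j, u j) - ∑ j, Pi.single i (1:ℤ) j :=
    Finset.sum_sub_distrib _ _
  rw [this, Finset.sum_pi_single' i 1]
  simp only [Finset.mem_univ, if_true]
  ring

lemma stepW_true_iff {u t : Fin d → ℤ} :
    stepW d true u t ↔ adjW d u t ∧ rankW d t = rankW d u + 1 := by
  constructor
  · rintro ⟨h1, h2, i, hi⟩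
    simp only [if_true] at hi
    exact ⟨⟨h1, h2, i, Or.inl hi⟩, by rw [hi, rank_add]⟩
  · rintro ⟨⟨h1, h2, i, hor⟩, hr⟩
    refine ⟨h1, h2, i, ?_⟩
    simp only [if_true]
    rcases hor with h | h
    · exact h
    · exfalso; rw [h, rank_sub] at hr; omega
lemma stepW_false_iff {u t : Fin d → ℤ} :
    stepW d false u t ↔ adjW d u t ∧ rankW d t = rankW d u - 1 := by
  constructor
  · rintro ⟨h1, h2, i, hi⟩
    simp only [Bool.false_eq_true, if_false] at hi
    exact ⟨⟨h1, h2, i, Or.inr hi⟩, by rw [hi, rank_sub]⟩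
  · rintro ⟨⟨h1, h2, i, hor⟩, hr⟩
    refine ⟨h1, h2, i, ?_⟩
    simp only [Bool.false_eq_true, if_false]
    rcases hor with h | h
    · exfalso; rw [h, rank_add] at hr; omega
    · exact h

lemma adjW_iff {u v : Fin d → ℤ} :
    adjW d u v ↔ stepW d true u v ∨ stepW d false u v := by
  unfold adjW stepW
  constructor
  · rintro ⟨h1, h2, i, h | h⟩
    · exact Or.inl ⟨h1, h2, i, by simpa using h⟩
    · exact Or.inr ⟨h1, h2, i, by simpa using h⟩
  · rintro (⟨h1, h2, i, h⟩ | ⟨h1, h2, i, h⟩)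
    · exact ⟨h1, h2, i, Or.inl (by simpa using h)⟩
    · exact ⟨h1, h2, i, Or.inr (by simpa using h)⟩

lemma stepW_rank {b : Bool} {u v : Fin d → ℤ} (h : stepW d b u v) :
    rankW d v = rankW d u + (if b then 1 else -1) := by
  cases b
  · rw [stepW_false_iff] at h; simp [h.2]; omega
  · rw [stepW_true_iff] at h; simp [h.2]

lemma stepFS_disjoint (u : Fin d → ℤ) : Disjoint (stepFS d true u) (stepFS d false u) := by
  rw [Finset.disjoint_left]
  intro v hv hv'
  rw [mem_stepFS] at hv hv'
  have := stepW_rank hv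
  have := stepW_rank hv'
  simp at *
  omega

end Step
section YDef
variable {d : ℕ}

noncomputable def Yc (d : ℕ) (w : List Bool) (μ lam : Fin d → ℤ) : ℕ :=
  (WkSet w.length (fun k => stepW d (w.get k)) μ lam).ncard

open Classical in
lemma Yc_nil (μ lam : Fin d → ℤ) : Yc d [] μ lam = if μ = lam then 1 else 0 := by
  rw [show Yc d ([] : List Bool) μ lam = _ from ncard_wkSet_zero _ μ lam]
  congr

lemma Yc_cons (b : Bool) (w : List Bool) (μ lam : Fin d → ℤ) :
    Yc d (b :: w) μ lam = ∑ t ∈ stepFS d b μ, Yc d w t lam :=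
  ncard_wkSet_succ w.length (fun k => stepW d ((b :: w).get k))
    (fun k u => stepW_finite d _ u) μ lam

lemma Zd_eq_wkSet (d N : ℕ) (μ lam : Fin d → ℤ) :
    Zd d N μ lam = (WkSet N (fun _ => adjW d) μ lam).ncard := rfl

end YDef
section ZdSum
variable {d : ℕ}

lemma adjW_finite (d : ℕ) (u : Fin d → ℤ) : {v | adjW d u v}.Finite := by
  have : {v | adjW d u v} = {v | stepW d true u v} ∪ {v | stepW d false u v} :=
    Set.ext fun v => adjW_iff
  rw [this]
  exact (stepW_finite d true u).union (stepW_finite d false u)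

lemma Zd_succ (d N : ℕ) (μ lam : Fin d → ℤ) :
    Zd d (N+1) μ lam = ∑ t ∈ stepFS d true μ ∪ stepFS d false μ, Zd d N t lam := by
  classical
  rw [Zd_eq_wkSet, ncard_wkSet_succ N (fun _ => adjW d) (fun _ u => adjW_finite d u) μ lam]
  have hset : (adjW_finite d μ).toFinset = stepFS d true μ ∪ stepFS d false μ := by
    ext v
    simp only [Set.Finite.mem_toFinset, Finset.mem_union, mem_stepFS, Set.mem_setOf_eq]
    exact adjW_iff
  rw [hset]
  exact Finset.sum_congr rfl fun t _ => rfl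

lemma ofFn_cons (b : Bool) {N : ℕ} (g : Fin N → Bool) :
    List.ofFn (Fin.cons b g) = b :: List.ofFn g := by
  rw [List.ofFn_succ]
  simp

lemma Zd_eq_sum (d : ℕ) : ∀ (N : ℕ) (μ lam : Fin d → ℤ),
    Zd d N μ lam = ∑ f : Fin N → Bool, Yc d (List.ofFn f) μ lam := by
  intro N
  induction N with
  | zero =>
    intro μ lam
    rw [Zd_eq_wkSet, ncard_wkSet_zero]
    have h1 : ∀ f : Fin 0 → Bool, Yc d (List.ofFn f) μ lam = if μ = lam then 1 else 0 :=
      fun f => by rw [List.ofFn_zero, Yc_nil]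
    rw [Finset.sum_congr rfl (fun f _ => h1 f), Finset.sum_const]
    simp [Finset.card_univ]
  | succ N ih =>
    intro μ lam
    rw [Zd_succ, Finset.sum_union (stepFS_disjoint μ)]
    have e : ∑ f : Fin (N+1) → Bool, Yc d (List.ofFn f) μ lam
        = ∑ x : Bool × (Fin N → Bool), Yc d (List.ofFn (Fin.cons x.1 x.2)) μ lam :=
      (Fintype.sum_equiv (Fin.consEquiv (fun _ => Bool))
        (fun x => Yc d (List.ofFn (Fin.cons x.1 x.2)) μ lam)
        (fun f => Yc d (List.ofFn f) μ lam) (fun x => rfl)).symm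
    rw [e, Fintype.sum_prod_type]
    have e2 : ∀ b : Bool, ∀ g : Fin N → Bool,
        Yc d (List.ofFn (Fin.cons b g)) μ lam = ∑ t ∈ stepFS d b μ, Yc d (List.ofFn g) t lam :=
      fun b g => by rw [ofFn_cons, Yc_cons]
    have e3 : ∀ b : Bool,
        ∑ g : Fin N → Bool, Yc d (List.ofFn (Fin.cons b g)) μ lam
          = ∑ t ∈ stepFS d b μ, Zd d N t lam := by
      intro b
      rw [Finset.sum_congr rfl fun g _ => e2 b g, Finset.sum_comm]
      exact Finset.sum_congr rfl fun t _ => (ih t lam).symm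
    rw [Fintype.sum_bool]
    rw [e3 true, e3 false]

end ZdSum
section Perm
variable {d : ℕ}

open Classical in
lemma double_to_count (a b : Bool) (u : Fin d → ℤ) (g : (Fin d → ℤ) → ℕ)
    (S : Finset (Fin d → ℤ))
    (hS : ∀ t s, t ∈ stepFS d a u → s ∈ stepFS d b t → s ∈ S) :
    ∑ t ∈ stepFS d a u, ∑ s ∈ stepFS d b t, g s
      = ∑ s ∈ S, {t | stepW d a u t ∧ stepW d b t s}.ncard * g s := by
  have h1 : ∀ t ∈ stepFS d a u,
      ∑ s ∈ stepFS d b t, g s = ∑ s ∈ S, if stepW d b t s then g s else 0 := by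
    intro t ht
    rw [Finset.sum_congr rfl (g := fun s => if stepW d b t s then g s else 0)
      (fun s hs => (if_pos (mem_stepFS.mp hs)).symm)]
    apply Finset.sum_subset (fun s hs => hS t s ht hs)
    intro s _ hs
    rw [if_neg (fun h => hs (mem_stepFS.mpr h))]
  rw [Finset.sum_congr rfl h1, Finset.sum_comm]
  apply Finset.sum_congr rfl
  intro s _
  have h2 : ∀ t, (if stepW d b t s then g s else 0) = (if stepW d b t s then 1 else 0) * g s := by
    intro t; split_ifs <;> simp
  rw [Finset.sum_congr rfl (fun t _ => h2 t), ← Finset.sum_mul, ← Finset.card_filter]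
  congr 1
  have : {t | stepW d a u t ∧ stepW d b t s}
      = ((stepFS d a u).filter (fun t => stepW d b t s) : Finset (Fin d → ℤ)) := by
    ext t
    simp [Finset.mem_filter, mem_stepFS]
  rw [this, Set.ncard_coe_finset]

lemma sum_swap_step (a b : Bool) (u : Fin d → ℤ) (g : (Fin d → ℤ) → ℕ)
    (hsw : ∀ s, {t | stepW d a u t ∧ stepW d b t s}.ncard
      = {t | stepW d b u t ∧ stepW d a t s}.ncard) :
    ∑ t ∈ stepFS d a u, ∑ s ∈ stepFS d b t, g s
      = ∑ t ∈ stepFS d b u, ∑ s ∈ stepFS d a t, g s := by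
  classical
  set S := ((stepFS d a u).biUnion (stepFS d b)) ∪ ((stepFS d b u).biUnion (stepFS d a)) with hSdef
  rw [double_to_count a b u g S
      (fun t s ht hs => Finset.mem_union_left _ (Finset.mem_biUnion.mpr ⟨t, ht, hs⟩)),
    double_to_count b a u g S
      (fun t s ht hs => Finset.mem_union_right _ (Finset.mem_biUnion.mpr ⟨t, ht, hs⟩))]
  exact Finset.sum_congr rfl fun s _ => by rw [hsw s]

lemma Yc_perm
    (hsw : ∀ u v : Fin d → ℤ, {t | stepW d true u t ∧ stepW d false t v}.ncard
      = {t | stepW d false u t ∧ stepW d true t v}.ncard)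
    {w1 w2 : List Bool} (hp : w1.Perm w2) :
    ∀ μ lam : Fin d → ℤ, Yc d w1 μ lam = Yc d w2 μ lam := by
  induction hp with
  | nil => intro μ lam; rfl
  | cons b _ ih =>
    intro μ lam
    rw [Yc_cons, Yc_cons]
    exact Finset.sum_congr rfl fun t _ => ih t lam
  | swap a b w =>
    intro μ lam
    rw [Yc_cons, Yc_cons]
    rw [Finset.sum_congr rfl (fun t _ => Yc_cons a w t lam),
      Finset.sum_congr rfl (fun t _ => Yc_cons b w t lam)]
    rcases Bool.eq_false_or_eq_true b with hb | hb <;>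
      rcases Bool.eq_false_or_eq_true a with ha | ha <;> subst hb <;> subst ha
    · rfl
    · exact sum_swap_step true false μ _ (fun s => hsw μ s)
    · exact sum_swap_step false true μ _ (fun s => (hsw μ s).symm)
    · rfl
  | trans _ _ ih1 ih2 =>
    intro μ lam
    rw [ih1, ih2]

lemma Yc_rank (lam : Fin d → ℤ) : ∀ (w : List Bool) (μ : Fin d → ℤ),
    Yc d w μ lam ≠ 0 →
    rankW d lam - rankW d μ = (w.count true : ℤ) - (w.count false : ℤ) := by
  intro w
  induction w with
  | nil =>
    intro μ h
    rw [Yc_nil] at h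
    split_ifs at h with he
    · subst he; simp
    · exact absurd rfl h
  | cons b w ih =>
    intro μ h
    rw [Yc_cons] at h
    obtain ⟨t, ht, hne⟩ := Finset.exists_ne_zero_of_sum_ne_zero h
    have hr := stepW_rank (mem_stepFS.mp ht)
    have h2 := ih t hne
    cases b
    · simp only [Bool.false_eq_true, if_false] at hr
      simp only [List.count_cons]
      norm_num
      push_cast
      linarith
    · simp only [if_true] at hr
      simp only [List.count_cons]
      norm_num
      push_cast
      linarith

end Perm
section Final
variable {d : ℕ}

lemma Zword_eq_Yc (w : List Bool) (μ lam : Fin d → ℤ) (hμ : StrictAnti μ) :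
    Zword d w μ lam = Yc d w μ lam := by
  classical
  cases w with
  | nil =>
    rw [Yc_nil]
    unfold Zword
    simp only [List.length_nil]
    split_ifs with h
    · subst h
      have he : {p : Fin (0 + 1) → Fin d → ℤ |
          p 0 = μ ∧ p (Fin.last 0) = μ ∧ (∀ k, StrictAnti (p k)) ∧
          ∀ k : Fin 0, ∃ i : Fin d,
            if ([] : List Bool).get k then p k.succ = p k.castSucc + Pi.single i 1
            else p k.succ = p k.castSucc - Pi.single i 1} = {fun _ => μ} := by
        ext p
        constructor
        · rintro ⟨h0, -, -, -⟩
          exact funext fun j => by rw [Fin.fin_one_eq_zero j]; exact h0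
        · rintro rfl
          exact ⟨rfl, rfl, fun k => hμ, fun k => k.elim0⟩
      rw [he, Set.ncard_singleton]
    · have he : {p : Fin (0 + 1) → Fin d → ℤ |
          p 0 = μ ∧ p (Fin.last 0) = lam ∧ (∀ k, StrictAnti (p k)) ∧
          ∀ k : Fin 0, ∃ i : Fin d,
            if ([] : List Bool).get k then p k.succ = p k.castSucc + Pi.single i 1
            else p k.succ = p k.castSucc - Pi.single i 1} = ∅ := by
        ext p
        simp only [Set.mem_empty_iff_false, iff_false]
        rintro ⟨h0, hl, -, -⟩
        exact h (by rw [← h0, ← hl, Fin.fin_one_eq_zero (Fin.last 0)])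
      rw [he, Set.ncard_empty]
  | cons b w' =>
    unfold Zword Yc
    congr 1
    ext p
    constructor
    · rintro ⟨h0, hl, hSA, hst⟩
      exact ⟨h0, hl, fun k => ⟨hSA _, hSA _, hst k⟩⟩
    · rintro ⟨h0, hl, hst⟩
      refine ⟨h0, hl, ?_, fun k => (hst k).2.2⟩
      intro j
      by_cases hj : (j : ℕ) < w'.length + 1
      · have hje : j = (⟨(j : ℕ), hj⟩ : Fin (w'.length + 1)).castSucc := by
          apply Fin.ext; rfl
        rw [hje]
        exact (hst ⟨(j : ℕ), hj⟩).1
      · have hj' : (j : ℕ) = w'.length + 1 := by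
          have := j.isLt
          simp only [List.length_cons] at this
          omega
        have hje : j = (Fin.last w'.length).succ := by
          apply Fin.ext
          simp [hj', Fin.last]
        rw [hje]
        exact (hst (Fin.last w'.length)).2.1

lemma count_ofFn : ∀ {N : ℕ} (f : Fin N → Bool) (b : Bool),
    (List.ofFn f).count b = (Finset.univ.filter (fun i => f i = b)).card := by
  intro N
  induction N with
  | zero => intro f b; simp [List.ofFn_zero]
  | succ N ih =>
    intro f b
    rw [List.ofFn_succ, List.count_cons, ih (fun i => f i.succ) b]
    rw [Finset.card_filter, Finset.card_filter, Fin.sum_univ_succ]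
    simp only [beq_iff_eq]
    exact Nat.add_comm _ _

lemma count_tf (l : List Bool) : l.count true + l.count false = l.length := by
  induction l with
  | nil => rfl
  | cons b l ih =>
    cases b <;> simp [List.count_cons] <;> omega

lemma card_words (N n : ℕ) :
    (Finset.univ.filter (fun f : Fin N → Bool => (List.ofFn f).count false = n)).card
      = N.choose n := by
  classical
  have h := Finset.card_powersetCard n (Finset.univ : Finset (Fin N))
  rw [Finset.card_univ, Fintype.card_fin] at h
  rw [← h]
  refine Finset.card_bij' (fun f _ => Finset.univ.filter (fun i => f i = false))
    (fun S _ => fun i => decide (i ∉ S)) ?_ ?_ ?_ ?_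
  · intro f hf
    rw [Finset.mem_powersetCard]
    refine ⟨Finset.subset_univ _, ?_⟩
    rw [← count_ofFn]
    exact (Finset.mem_filter.mp hf).2
  · intro S hS2
    rw [Finset.mem_powersetCard] at hS2
    refine Finset.mem_filter.mpr ⟨Finset.mem_univ _, ?_⟩
    rw [count_ofFn]
    have e : (Finset.filter (fun i : Fin N => decide (i ∉ S) = false) Finset.univ) = S := by
      ext i; simp
    calc (Finset.filter (fun i : Fin N => decide (i ∉ S) = false) Finset.univ).card
        = S.card := by rw [e]
      _ = n := hS2.2
  · intro f hf
    funext i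
    by_cases h : f i = false <;> simp [h]
  · intro S hS
    ext i
    simp

end Final

/-- assuming the raising and lowering operators on `W_d` commute, the total
number of `N`-step walks from `μ` to `λ`, `N = 2n + k` with `k = r(λ) − r(μ) ≥ 0`, equals
`(2n+k choose n)` times the number of walks following any fixed word with `n` letters `L`
and `n + k` letters `R`. -/
theorem stmt5 {d : ℕ}
    (hcomm : ∀ u v : Fin d → ℤ,
      {t | adjW d u t ∧ rankW d t = rankW d u + 1 ∧
           adjW d t v ∧ rankW d v = rankW d t - 1}.ncard =
      {t | adjW d u t ∧ rankW d t = rankW d u - 1 ∧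
           adjW d t v ∧ rankW d v = rankW d t + 1}.ncard)
    (μ lam : Fin d → ℤ) (hμ : StrictAnti μ) (hlam : StrictAnti lam)
    (n k : ℕ) (hk : (k : ℤ) = rankW d lam - rankW d μ)
    (W : List Bool) (hWL : W.count false = n) (hWR : W.count true = n + k) :
    Zd d (2 * n + k) μ lam = (2 * n + k).choose n * Zword d W μ lam := by
  classical
  have hsw : ∀ u v : Fin d → ℤ,
      {t | stepW d true u t ∧ stepW d false t v}.ncard
        = {t | stepW d false u t ∧ stepW d true t v}.ncard := by
    intro u v
    have h1 : {t | stepW d true u t ∧ stepW d false t v}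
        = {t | adjW d u t ∧ rankW d t = rankW d u + 1 ∧
            adjW d t v ∧ rankW d v = rankW d t - 1} := by
      ext t
      simp only [Set.mem_setOf_eq, stepW_true_iff, stepW_false_iff]
      tauto
    have h2 : {t | stepW d false u t ∧ stepW d true t v}
        = {t | adjW d u t ∧ rankW d t = rankW d u - 1 ∧
            adjW d t v ∧ rankW d v = rankW d t + 1} := by
      ext t
      simp only [Set.mem_setOf_eq, stepW_true_iff, stepW_false_iff]
      tauto
    rw [h1, h2]
    exact hcomm u v
  rw [Zd_eq_sum]
  rw [← Finset.sum_filter_add_sum_filter_not Finset.univ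
    (fun f : Fin (2*n+k) → Bool => (List.ofFn f).count false = n)]
  have hzero : ∑ f ∈ Finset.univ.filter
      (fun f : Fin (2*n+k) → Bool => ¬ (List.ofFn f).count false = n),
      Yc d (List.ofFn f) μ lam = 0 := by
    apply Finset.sum_eq_zero
    intro f hf
    rw [Finset.mem_filter] at hf
    by_contra hne
    have hr := Yc_rank lam (List.ofFn f) μ hne
    have hc : (List.ofFn f).count true + (List.ofFn f).count false = 2*n+k := by
      rw [count_tf, List.length_ofFn]
    have hz : ((List.ofFn f).count true : ℤ) - (List.ofFn f).count false = k := by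
      rw [← hr]; exact hk.symm
    exact hf.2 (by omega)
  rw [hzero, Nat.add_zero]
  have hperm : ∀ f ∈ Finset.univ.filter
      (fun f : Fin (2*n+k) → Bool => (List.ofFn f).count false = n),
      Yc d (List.ofFn f) μ lam = Yc d W μ lam := by
    intro f hf
    rw [Finset.mem_filter] at hf
    apply Yc_perm hsw
    rw [List.perm_iff_count]
    intro a
    have hc : (List.ofFn f).count true + (List.ofFn f).count false = 2*n+k := by
      rw [count_tf, List.length_ofFn]
    cases a
    · rw [hf.2, hWL]
    · rw [hWR]
      omega
  rw [Finset.sum_congr rfl hperm, Finset.sum_const, card_words, smul_eq_mul]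
  rw [Zword_eq_Yc W μ lam hμ]
end

section
/- Let μ, λ ∈ W_d with k = r(λ) − r(μ) ≥ 0, and for each n ≥ 0 let W_n be any word with n letters L and n+k letters R. Then (assuming commutation of raising and lowering operators on W_d and the reflection-principle determinant formula) Σ_{n≥0} Z_d(W_n; μ, λ) x^{2n+k}/(n!(n+k)!) = det(I_{λ_i − μ_j}(2x))_{1≤i,j≤d}. -/
/-- The modified Bessel function `I_k(2x)` of integer order `k`, as a formal power
series. -/
noncomputable def besselI (k : ℤ) : PowerSeries ℚ :=
  PowerSeries.mk fun N =>
    if 2 ∣ ((N : ℤ) - k) ∧ k ≤ (N : ℤ) ∧ -k ≤ (N : ℤ) then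
      1 / ((Nat.factorial (((N : ℤ) - k) / 2).toNat) *
           (Nat.factorial (((N : ℤ) + k) / 2).toNat))
    else 0

open Finset

namespace S12

variable {d : ℕ}

def nbr (b : Bool) (u : Fin d → ℤ) : Set (Fin d → ℤ) :=
  {t | StrictAnti t ∧ ∃ i : Fin d,
    if b then t = u + Pi.single i 1 else t = u - Pi.single i 1}

lemma nbr_finite (b : Bool) (u : Fin d → ℤ) : (nbr b u).Finite := by
  have h : nbr b u ⊆ (Set.range fun i : Fin d => u + Pi.single i 1) ∪
      (Set.range fun i : Fin d => u - Pi.single i 1) := by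
    rintro t ⟨-, i, ht⟩
    cases b with
    | true => exact Or.inl ⟨i, by simpa using ht.symm⟩
    | false => exact Or.inr ⟨i, by simpa using ht.symm⟩
  exact ((Set.finite_range _).union (Set.finite_range _)).subset h

lemma rank_add (u : Fin d → ℤ) (i : Fin d) :
    rankW d (u + Pi.single i 1) = rankW d u + 1 := by
  simp [rankW, Finset.sum_add_distrib]
  ring

lemma rank_sub (u : Fin d → ℤ) (i : Fin d) :
    rankW d (u - Pi.single i 1) = rankW d u - 1 := by
  simp [rankW, Finset.sum_sub_distrib]
  ring

lemma rank_nbr {b : Bool} {t u : Fin d → ℤ} (h : t ∈ nbr b u) :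
    rankW d t = rankW d u + (if b then 1 else -1) := by
  obtain ⟨-, i, ht⟩ := h
  cases b with
  | true => simp only [if_true] at ht ⊢; rw [ht, rank_add]
  | false => simp only [if_false, Bool.false_eq_true] at ht ⊢; rw [ht, rank_sub]; ring

lemma ncard_biUnion {α β : Type*} [DecidableEq β] (s : Finset β) (A : β → Set α)
    (hfin : ∀ b ∈ s, (A b).Finite)
    (hdisj : ∀ b ∈ s, ∀ c ∈ s, b ≠ c → Disjoint (A b) (A c)) :
    (⋃ b ∈ s, A b).ncard = ∑ b ∈ s, (A b).ncard := by
  induction s using Finset.induction with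
  | empty => simp
  | @insert a s ha IH =>
    rw [Finset.set_biUnion_insert, Finset.sum_insert ha,
      Set.ncard_union_eq ?_ (hfin a (Finset.mem_insert_self a s)) ?_,
      IH (fun b hb => hfin b (Finset.mem_insert_of_mem hb))
        (fun b hb c hc h => hdisj b (Finset.mem_insert_of_mem hb) c (Finset.mem_insert_of_mem hc) h)]
    · exact Set.disjoint_iUnion₂_right.2 fun b hb =>
        hdisj a (Finset.mem_insert_self a s) b (Finset.mem_insert_of_mem hb)
          (fun h => ha (h ▸ hb))
    · exact Set.Finite.biUnion s.finite_toSet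
        (fun b hb => hfin b (Finset.mem_insert_of_mem hb))

def preWalk (m : ℕ) (μ : Fin d → ℤ) : Set (Fin (m + 1) → Fin d → ℤ) :=
  {p | p 0 = μ ∧ ∀ k : Fin m, ∃ i : Fin d,
    p k.succ = p k.castSucc + Pi.single i 1 ∨ p k.succ = p k.castSucc - Pi.single i 1}

lemma preWalk_finite : ∀ (m : ℕ) (μ : Fin d → ℤ), (preWalk m μ).Finite := by
  intro m
  induction m with
  | zero =>
    intro μ
    refine Set.Finite.subset (Set.finite_singleton (fun _ => μ)) ?_
    rintro p ⟨h0, -⟩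
    refine Set.mem_singleton_iff.2 (funext fun j => ?_)
    have hj : j = 0 := Fin.ext (by omega)
    rw [hj, h0]
  | succ m IH =>
    intro μ
    have hsub : (fun p : Fin (m + 2) → Fin d → ℤ => p ∘ Fin.succ) '' preWalk (m + 1) μ ⊆
        ⋃ v ∈ (nbr true μ ∪ nbr false μ) ∪ {q : Fin d → ℤ | ∃ i : Fin d,
          (q = μ + Pi.single i 1 ∨ q = μ - Pi.single i 1)}, preWalk m v := by
      rintro q ⟨p, ⟨h0, hstep⟩, rfl⟩
      refine Set.mem_biUnion (x := p 1) (Or.inr ?_) ?_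
      · obtain ⟨i, hi⟩ := hstep 0
        refine ⟨i, ?_⟩
        simpa [h0, show (0 : Fin (m+1)).succ = 1 from rfl, show Fin.castSucc (0 : Fin (m+1)) = 0 from rfl] using hi
      · constructor
        · rfl
        · intro k
          obtain ⟨i, hi⟩ := hstep k.succ
          refine ⟨i, ?_⟩
          simpa [Function.comp, ← Fin.succ_castSucc] using hi
    have hfin2 : ({q : Fin d → ℤ | ∃ i : Fin d,
        (q = μ + Pi.single i 1 ∨ q = μ - Pi.single i 1)}).Finite := by
      have : {q : Fin d → ℤ | ∃ i : Fin d, (q = μ + Pi.single i 1 ∨ q = μ - Pi.single i 1)} ⊆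
          (Set.range fun i : Fin d => μ + Pi.single i 1) ∪
          (Set.range fun i : Fin d => μ - Pi.single i 1) := by
        rintro q ⟨i, h | h⟩
        exacts [Or.inl ⟨i, h.symm⟩, Or.inr ⟨i, h.symm⟩]
      exact ((Set.finite_range _).union (Set.finite_range _)).subset this
    have himg : ((fun p : Fin (m + 2) → Fin d → ℤ => p ∘ Fin.succ) '' preWalk (m + 1) μ).Finite := by
      refine Set.Finite.subset (Set.Finite.biUnion ?_ fun v _ => IH v) hsub
      exact (((nbr_finite true μ).union (nbr_finite false μ)).union hfin2)
    refine Set.Finite.of_finite_image himg ?_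
    rintro p ⟨hp0, -⟩ p' ⟨hp'0, -⟩ h
    funext j
    induction j using Fin.cases with
    | zero => rw [hp0, hp'0]
    | succ j => exact congrFun h j

def pSet (m : ℕ) (c : Fin m → Bool) (μ lam : Fin d → ℤ) :
    Set (Fin (m + 1) → Fin d → ℤ) :=
  {p | p 0 = μ ∧ p (Fin.last m) = lam ∧ (∀ k, StrictAnti (p k)) ∧
      ∀ k : Fin m, ∃ i : Fin d,
        if c k then p k.succ = p k.castSucc + Pi.single i 1
        else p k.succ = p k.castSucc - Pi.single i 1}

noncomputable def Zp (m : ℕ) (c : Fin m → Bool) (μ lam : Fin d → ℤ) : ℕ :=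
  (pSet m c μ lam).ncard

lemma Zword_eq_Zp (l : List Bool) (μ lam : Fin d → ℤ) :
    Zword d l μ lam = Zp l.length (fun k => l.get k) μ lam := rfl

lemma pSet_subset_preWalk (m : ℕ) (c : Fin m → Bool) (μ lam : Fin d → ℤ) :
    pSet m c μ lam ⊆ preWalk m μ := by
  rintro p ⟨h0, -, -, hstep⟩
  refine ⟨h0, fun k => ?_⟩
  obtain ⟨i, hi⟩ := hstep k
  refine ⟨i, ?_⟩
  split at hi
  · exact Or.inl hi
  · exact Or.inr hi

lemma pSet_finite (m : ℕ) (c : Fin m → Bool) (μ lam : Fin d → ℤ) :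
    (pSet m c μ lam).Finite :=
  (preWalk_finite m μ).subset (pSet_subset_preWalk m c μ lam)

lemma Zp_zero_of_not_strictAnti (m : ℕ) (c : Fin m → Bool) {μ : Fin d → ℤ}
    (lam : Fin d → ℤ) (hμ : ¬ StrictAnti μ) : Zp m c μ lam = 0 := by
  have h : pSet m c μ lam = ∅ := by
    ext p
    simp only [Set.mem_empty_iff_false, iff_false]
    rintro ⟨h0, -, hsa, -⟩
    exact hμ (h0 ▸ hsa 0)
  rw [Zp, h, Set.ncard_empty]

def consMap (m : ℕ) (μ : Fin d → ℤ) (q : Fin (m + 1) → Fin d → ℤ) :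
    Fin (m + 2) → Fin d → ℤ :=
  Fin.cons μ q

lemma consMap_injective (m : ℕ) (μ : Fin d → ℤ) : Function.Injective (consMap m μ) := by
  intro q r h
  funext j
  have := congrFun h j.succ
  simpa [consMap] using this

@[simp] lemma consMap_zero (m : ℕ) (μ : Fin d → ℤ) (q : Fin (m + 1) → Fin d → ℤ) :
    consMap m μ q 0 = μ := rfl

@[simp] lemma consMap_one (m : ℕ) (μ : Fin d → ℤ) (q : Fin (m + 1) → Fin d → ℤ) :
    consMap m μ q 1 = q 0 := by
  have h : (1 : Fin (m + 2)) = Fin.succ 0 := by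
    ext
    simp [Fin.val_one]
  rw [h]
  simp [consMap]

@[simp] lemma consMap_succ (m : ℕ) (μ : Fin d → ℤ) (q : Fin (m + 1) → Fin d → ℤ)
    (j : Fin (m + 1)) : consMap m μ q j.succ = q j := by
  simp [consMap]

lemma pSet_cons (m : ℕ) (c : Fin (m + 1) → Bool) (μ lam : Fin d → ℤ)
    (hμ : StrictAnti μ) :
    pSet (m + 1) c μ lam =
      ⋃ t ∈ nbr (c 0) μ, consMap m μ '' pSet m (fun k => c k.succ) t lam := by
  ext p
  constructor
  · rintro ⟨h0, hlast, hsa, hstep⟩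
    refine Set.mem_biUnion (x := p (Fin.succ 0)) ?_
      ⟨p ∘ Fin.succ, ⟨rfl, ?_, fun k => hsa _, fun k => ?_⟩, ?_⟩
    · obtain ⟨i, hi⟩ := hstep 0
      simp only [Fin.castSucc_zero, h0] at hi
      exact ⟨hsa _, i, hi⟩
    · show p ((Fin.last m).succ) = lam
      rw [Fin.succ_last]
      exact hlast
    · obtain ⟨i, hi⟩ := hstep k.succ
      refine ⟨i, ?_⟩
      simpa [Function.comp, ← Fin.succ_castSucc] using hi
    · funext j
      induction j using Fin.cases with
      | zero => simpa using h0.symm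
      | succ j => simp [consMap]
  · simp only [Set.mem_iUnion]
    rintro ⟨t, ⟨hta, i0, ht⟩, q, ⟨hq0, hqlast, hqsa, hqstep⟩, rfl⟩
    refine ⟨rfl, ?_, fun j => ?_, fun k => ?_⟩
    · rw [← Fin.succ_last, consMap_succ]
      exact hqlast
    · induction j using Fin.cases with
      | zero => simpa using hμ
      | succ j => simpa using hqsa j
    · induction k using Fin.cases with
      | zero =>
        refine ⟨i0, ?_⟩
        simpa [hq0, show Fin.succ (0 : Fin (m+1)) = (0 : Fin (m+1)).succ from rfl] using ht
      | succ j =>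
        obtain ⟨i, hi⟩ := hqstep j
        refine ⟨i, ?_⟩
        simpa [← Fin.succ_castSucc] using hi

lemma Zp_cons (m : ℕ) (c : Fin (m + 1) → Bool) (μ lam : Fin d → ℤ)
    (hμ : StrictAnti μ) :
    Zp (m + 1) c μ lam =
      ∑ t ∈ (nbr_finite (c 0) μ).toFinset, Zp m (fun k => c k.succ) t lam := by
  rw [Zp, pSet_cons m c μ lam hμ]
  have h : (⋃ t ∈ nbr (c 0) μ, consMap m μ '' pSet m (fun k => c k.succ) t lam) =
      ⋃ t ∈ (nbr_finite (c 0) μ).toFinset,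
        consMap m μ '' pSet m (fun k => c k.succ) t lam := by
    simp [Set.Finite.mem_toFinset]
  rw [h, ncard_biUnion]
  · exact Finset.sum_congr rfl fun t _ =>
      Set.ncard_image_of_injective _ (consMap_injective m μ)
  · exact fun t _ => ((pSet_finite m _ t lam).image _)
  · intro t ht u hu htu
    rw [Set.disjoint_left]
    rintro p ⟨q, hq, rfl⟩ ⟨r, hr, hcr⟩
    apply htu
    have h1 : q 0 = t := hq.1
    have h2 : r 0 = u := hr.1
    have h3 : q 0 = r 0 := by
      have := congrFun hcr.symm (Fin.succ 0)
      simpa using this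
    rw [← h1, h3, h2]

lemma Zword_cons (b : Bool) (l : List Bool) (μ lam : Fin d → ℤ) (hμ : StrictAnti μ) :
    Zword d (b :: l) μ lam = ∑ t ∈ (nbr_finite b μ).toFinset, Zword d l t lam := by
  show Zp (l.length + 1) (fun k => (b :: l).get k) μ lam = _
  rw [Zp_cons _ _ _ _ hμ]
  rfl

lemma Zword_zero_of_not_strictAnti (l : List Bool) {μ : Fin d → ℤ} (lam : Fin d → ℤ)
    (hμ : ¬ StrictAnti μ) : Zword d l μ lam = 0 :=
  Zp_zero_of_not_strictAnti l.length _ lam hμ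

lemma strictAnti_of_Zword_ne_zero (l : List Bool) {μ : Fin d → ℤ} (lam : Fin d → ℤ)
    (h : Zword d l μ lam ≠ 0) : StrictAnti μ := by
  by_contra hμ
  exact h (Zword_zero_of_not_strictAnti l lam hμ)

lemma rank_of_Zword_ne_zero (lam : Fin d → ℤ) :
    ∀ (l : List Bool) (μ : Fin d → ℤ), Zword d l μ lam ≠ 0 →
      rankW d lam = rankW d μ + l.count true - l.count false := by
  intro l
  induction l with
  | nil =>
    intro μ h
    obtain ⟨p, hp⟩ := Set.nonempty_of_ncard_ne_zero h
    obtain ⟨h0, hlast, -, -⟩ := hp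
    have : μ = lam := by rw [← h0, ← hlast]; rfl
    simp [this]
  | cons b l IH =>
    intro μ h
    have hμ : StrictAnti μ := strictAnti_of_Zword_ne_zero _ lam h
    rw [Zword_cons b l μ lam hμ] at h
    obtain ⟨t, ht, hne⟩ := Finset.exists_ne_zero_of_sum_ne_zero h
    rw [Set.Finite.mem_toFinset] at ht
    have hrt := rank_nbr ht
    have hIH := IH t hne
    cases b with
    | true =>
      simp only [if_true] at hrt
      simp only [List.count_cons, hIH, hrt]
      push_cast
      norm_num
      ring
    | false =>
      simp only [Bool.false_eq_true, if_false] at hrt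
      simp only [List.count_cons, hIH, hrt]
      push_cast
      norm_num
      ring

lemma nbr_true_iff {μ : Fin d → ℤ} (hμ : StrictAnti μ) (t : Fin d → ℤ) :
    t ∈ nbr true μ ↔ adjW d μ t ∧ rankW d t = rankW d μ + 1 := by
  constructor
  · rintro ⟨hta, i, hi⟩
    simp only [if_true] at hi
    exact ⟨⟨hμ, hta, i, Or.inl hi⟩, by rw [hi, rank_add]⟩
  · rintro ⟨⟨-, hta, i, hi | hi⟩, hrank⟩
    · exact ⟨hta, i, by simpa using hi⟩
    · exfalso
      rw [hi, rank_sub] at hrank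
      linarith
lemma nbr_false_iff {μ : Fin d → ℤ} (hμ : StrictAnti μ) (t : Fin d → ℤ) :
    t ∈ nbr false μ ↔ adjW d μ t ∧ rankW d t = rankW d μ - 1 := by
  constructor
  · rintro ⟨hta, i, hi⟩
    simp only [Bool.false_eq_true, if_false] at hi
    exact ⟨⟨hμ, hta, i, Or.inr hi⟩, by rw [hi, rank_sub]⟩
  · rintro ⟨⟨-, hta, i, hi | hi⟩, hrank⟩
    · exfalso
      rw [hi, rank_add] at hrank
      linarith
    · exact ⟨hta, i, by simpa using hi⟩

lemma strictAnti_of_mem_nbr {b : Bool} {t u : Fin d → ℤ} (h : t ∈ nbr b u) : StrictAnti t := h.1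

lemma mid_ncard_comm
    (hcomm : ∀ u v : Fin d → ℤ,
      {t | adjW d u t ∧ rankW d t = rankW d u + 1 ∧
           adjW d t v ∧ rankW d v = rankW d t - 1}.ncard =
      {t | adjW d u t ∧ rankW d t = rankW d u - 1 ∧
           adjW d t v ∧ rankW d v = rankW d t + 1}.ncard)
    {μ : Fin d → ℤ} (hμ : StrictAnti μ) (y x : Bool) (u : Fin d → ℤ) :
    {t | t ∈ nbr y μ ∧ u ∈ nbr x t}.ncard = {t | t ∈ nbr x μ ∧ u ∈ nbr y t}.ncard := by
  have h1 : {t | t ∈ nbr true μ ∧ u ∈ nbr false t} =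
      {t | adjW d μ t ∧ rankW d t = rankW d μ + 1 ∧
           adjW d t u ∧ rankW d u = rankW d t - 1} := by
    ext t
    simp only [Set.mem_setOf_eq]
    constructor
    · rintro ⟨ht, hu⟩
      obtain ⟨ha, hr⟩ := (nbr_true_iff hμ t).1 ht
      obtain ⟨ha', hr'⟩ := (nbr_false_iff (strictAnti_of_mem_nbr ht) u).1 hu
      exact ⟨ha, hr, ha', hr'⟩
    · rintro ⟨ha, hr, ha', hr'⟩
      exact ⟨(nbr_true_iff hμ t).2 ⟨ha, hr⟩, (nbr_false_iff ha.2.1 u).2 ⟨ha', hr'⟩⟩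
  have h2 : {t | t ∈ nbr false μ ∧ u ∈ nbr true t} =
      {t | adjW d μ t ∧ rankW d t = rankW d μ - 1 ∧
           adjW d t u ∧ rankW d u = rankW d t + 1} := by
    ext t
    simp only [Set.mem_setOf_eq]
    constructor
    · rintro ⟨ht, hu⟩
      obtain ⟨ha, hr⟩ := (nbr_false_iff hμ t).1 ht
      obtain ⟨ha', hr'⟩ := (nbr_true_iff (strictAnti_of_mem_nbr ht) u).1 hu
      exact ⟨ha, hr, ha', hr'⟩
    · rintro ⟨ha, hr, ha', hr'⟩
      exact ⟨(nbr_false_iff hμ t).2 ⟨ha, hr⟩, (nbr_true_iff ha.2.1 u).2 ⟨ha', hr'⟩⟩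
  cases y with
  | true =>
    cases x with
    | true => rfl
    | false => rw [h1, h2, hcomm μ u]
  | false =>
    cases x with
    | true => rw [h1, h2, hcomm μ u]
    | false => rfl

lemma Zword_expand2 (y x : Bool) (l : List Bool) {μ : Fin d → ℤ} (lam : Fin d → ℤ)
    (hμ : StrictAnti μ) (U : Finset (Fin d → ℤ))
    (hU : ∀ t ∈ nbr y μ, ∀ u ∈ nbr x t, u ∈ U) :
    Zword d (y :: x :: l) μ lam =
      ∑ u ∈ U, {t | t ∈ nbr y μ ∧ u ∈ nbr x t}.ncard * Zword d l u lam := by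
  classical
  rw [Zword_cons y (x :: l) μ lam hμ]
  have h1 : ∀ t ∈ (nbr_finite y μ).toFinset,
      Zword d (x :: l) t lam = ∑ u ∈ U, if u ∈ nbr x t then Zword d l u lam else 0 := by
    intro t ht
    rw [Set.Finite.mem_toFinset] at ht
    rw [Zword_cons x l t lam ht.1, ← Finset.sum_filter]
    apply Finset.sum_congr _ (fun _ _ => rfl)
    ext u
    rw [Finset.mem_filter, Set.Finite.mem_toFinset]
    exact ⟨fun h => ⟨hU t ht u h, h⟩, fun h => h.2⟩
  rw [Finset.sum_congr rfl h1, Finset.sum_comm]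
  apply Finset.sum_congr rfl
  intro u _
  rw [← Finset.sum_filter, Finset.sum_const, smul_eq_mul]
  congr 1
  have : {t | t ∈ nbr y μ ∧ u ∈ nbr x t} =
      ((nbr_finite y μ).toFinset.filter fun t => u ∈ nbr x t : Finset (Fin d → ℤ)) := by
    ext t
    simp [Set.Finite.mem_toFinset]
  rw [this, Set.ncard_coe_finset]

lemma Zword_swap
    (hcomm : ∀ u v : Fin d → ℤ,
      {t | adjW d u t ∧ rankW d t = rankW d u + 1 ∧
           adjW d t v ∧ rankW d v = rankW d t - 1}.ncard =
      {t | adjW d u t ∧ rankW d t = rankW d u - 1 ∧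
           adjW d t v ∧ rankW d v = rankW d t + 1}.ncard)
    (x y : Bool) (l : List Bool) (μ lam : Fin d → ℤ) :
    Zword d (y :: x :: l) μ lam = Zword d (x :: y :: l) μ lam := by
  classical
  by_cases hμ : StrictAnti μ
  · set U : Finset (Fin d → ℤ) :=
      ((nbr_finite y μ).toFinset.biUnion fun t => (nbr_finite x t).toFinset) ∪
      ((nbr_finite x μ).toFinset.biUnion fun t => (nbr_finite y t).toFinset) with hUdef
    rw [Zword_expand2 y x l lam hμ U ?_, Zword_expand2 x y l lam hμ U ?_]
    · exact Finset.sum_congr rfl fun u _ => by rw [mid_ncard_comm hcomm hμ y x u]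
    · intro t ht u hu
      refine Finset.mem_union_right _ (Finset.mem_biUnion.2 ⟨t, ?_, ?_⟩) <;>
        simp [Set.Finite.mem_toFinset, ht, hu]
    · intro t ht u hu
      refine Finset.mem_union_left _ (Finset.mem_biUnion.2 ⟨t, ?_, ?_⟩) <;>
        simp [Set.Finite.mem_toFinset, ht, hu]
  · rw [Zword_zero_of_not_strictAnti _ lam hμ, Zword_zero_of_not_strictAnti _ lam hμ]

lemma Zword_perm
    (hcomm : ∀ u v : Fin d → ℤ,
      {t | adjW d u t ∧ rankW d t = rankW d u + 1 ∧
           adjW d t v ∧ rankW d v = rankW d t - 1}.ncard =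
      {t | adjW d u t ∧ rankW d t = rankW d u - 1 ∧
           adjW d t v ∧ rankW d v = rankW d t + 1}.ncard)
    {l l' : List Bool} (h : l.Perm l') (lam : Fin d → ℤ) :
    ∀ μ : Fin d → ℤ, Zword d l μ lam = Zword d l' μ lam := by
  induction h with
  | nil => intro μ; rfl
  | cons b hll IH =>
    intro μ
    by_cases hμ : StrictAnti μ
    · rw [Zword_cons _ _ _ _ hμ, Zword_cons _ _ _ _ hμ]
      exact Finset.sum_congr rfl fun t _ => IH t
    · rw [Zword_zero_of_not_strictAnti _ lam hμ, Zword_zero_of_not_strictAnti _ lam hμ]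
  | swap x y l => exact fun μ => Zword_swap hcomm x y l μ lam
  | trans h1 h2 IH1 IH2 => exact fun μ => (IH1 μ).trans (IH2 μ)

def cOf (N : ℕ) (p : Fin (N + 1) → Fin d → ℤ) : Fin N → Bool :=
  fun k => decide (rankW d (p k.succ) = rankW d (p k.castSucc) + 1)

lemma ZdSet_eq_iUnion (N : ℕ) {μ : Fin d → ℤ} (lam : Fin d → ℤ) (hμ : StrictAnti μ) :
    {p : Fin (N + 1) → Fin d → ℤ |
      p 0 = μ ∧ p (Fin.last N) = lam ∧ ∀ k : Fin N, adjW d (p k.castSucc) (p k.succ)} =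
      ⋃ c : Fin N → Bool, pSet N c μ lam := by
  ext p
  simp only [Set.mem_setOf_eq, Set.mem_iUnion]
  constructor
  · rintro ⟨h0, hlast, hadj⟩
    refine ⟨cOf N p, h0, hlast, fun j => ?_, fun k => ?_⟩
    · by_cases hj : (j : ℕ) < N
      · have := (hadj ⟨j, hj⟩).1
        have hh : Fin.castSucc (⟨j, hj⟩ : Fin N) = j := by ext; rfl
        rwa [hh] at this
      · have hjN : (j : ℕ) = N := by omega
        cases N with
        | zero =>
          have : j = 0 := by ext; simpa using hjN
          rw [this, h0]
          exact hμ
        | succ M =>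
          have : j = (⟨M, Nat.lt_succ_self M⟩ : Fin (M + 1)).succ := by
            ext; simpa using hjN
          rw [this]
          exact (hadj _).2.1
    · obtain ⟨-, -, i, hi | hi⟩ := hadj k
      · have hc : cOf N p k = true := by
          apply decide_eq_true
          rw [hi, rank_add]
        rw [hc]
        simp only [if_true]
        exact ⟨i, hi⟩
      · have hc : cOf N p k = false := by
          apply decide_eq_false
          rw [hi, rank_sub]
          intro hcon
          linarith
        rw [hc]
        simp only [Bool.false_eq_true, if_false]
        exact ⟨i, hi⟩
  · rintro ⟨c, h0, hlast, hsa, hstep⟩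
    refine ⟨h0, hlast, fun k => ?_⟩
    obtain ⟨i, hi⟩ := hstep k
    refine ⟨hsa _, hsa _, i, ?_⟩
    split at hi
    · exact Or.inl hi
    · exact Or.inr hi

lemma pSet_disjoint (N : ℕ) (μ lam : Fin d → ℤ) {c c' : Fin N → Bool} (h : c ≠ c') :
    Disjoint (pSet N c μ lam) (pSet N c' μ lam) := by
  rw [Set.disjoint_left]
  rintro p ⟨-, -, -, hstep⟩ ⟨-, -, -, hstep'⟩
  apply h
  funext k
  obtain ⟨i, hi⟩ := hstep k
  obtain ⟨i', hi'⟩ := hstep' k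
  cases hc : c k <;> cases hc' : c' k <;> rw [hc] at hi <;> rw [hc'] at hi' <;>
    simp only [if_true, Bool.false_eq_true, if_false] at hi hi'
  · exfalso
    have h1 := rank_sub (p k.castSucc) i
    have h2 := rank_add (p k.castSucc) i'
    rw [← hi] at h1
    rw [← hi'] at h2
    linarith
  · exfalso
    have h1 := rank_add (p k.castSucc) i
    have h2 := rank_sub (p k.castSucc) i'
    rw [← hi] at h1
    rw [← hi'] at h2
    linarith

lemma Zd_eq_sum (N : ℕ) {μ : Fin d → ℤ} (lam : Fin d → ℤ) (hμ : StrictAnti μ) :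
    Zd d N μ lam = ∑ c : Fin N → Bool, Zp N c μ lam := by
  have h : Zd d N μ lam = (⋃ c : Fin N → Bool, pSet N c μ lam).ncard := by
    rw [Zd, ZdSet_eq_iUnion N lam hμ]
  rw [h]
  have h2 : (⋃ c : Fin N → Bool, pSet N c μ lam) =
      ⋃ c ∈ (Finset.univ : Finset (Fin N → Bool)), pSet N c μ lam := by
    simp
  rw [h2, ncard_biUnion]
  · rfl
  · exact fun c _ => pSet_finite N c μ lam
  · exact fun c _ c' _ h => pSet_disjoint N μ lam h

lemma Zp_congr {m m' : ℕ} (h : m = m') (c : Fin m → Bool) (μ lam : Fin d → ℤ) :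
    Zp m c μ lam = Zp m' (fun k => c (Fin.cast h.symm k)) μ lam := by
  subst h
  rfl

lemma Zword_ofFn {N : ℕ} (c : Fin N → Bool) (μ lam : Fin d → ℤ) :
    Zword d (List.ofFn c) μ lam = Zp N c μ lam := by
  rw [Zword_eq_Zp, Zp_congr (List.length_ofFn : (List.ofFn c).length = N) _ μ lam]
  congr 1
  funext k
  rw [List.get_ofFn]
  congr 1

lemma count_ofFn {N : ℕ} (b : Bool) (c : Fin N → Bool) :
    (List.ofFn c).count b = (Finset.univ.filter fun j => c j = b).card := by
  induction N with
  | zero => simp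
  | succ M IH =>
    rw [List.ofFn_succ, List.count_cons, IH (fun i => c i.succ),
      Finset.card_filter, Finset.card_filter, Fin.sum_univ_succ]
    cases hc : c 0 <;> cases b <;> simp [hc] <;> omega

lemma count_add_count (l : List Bool) : l.count true + l.count false = l.length := by
  induction l with
  | nil => simp
  | cons b l IH =>
    cases b <;> simp [List.count_cons] <;> omega

lemma card_weight (N a : ℕ) :
    (Finset.univ.filter fun c : Fin N → Bool => (List.ofFn c).count true = a).card =
      N.choose a := by
  classical
  have h : ((Finset.univ : Finset (Fin N)).powersetCard a).card = N.choose a := by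
    rw [Finset.card_powersetCard, Finset.card_univ, Fintype.card_fin]
  rw [← h]
  apply Finset.card_nbij' (fun c => Finset.univ.filter fun j => c j = true)
    (fun s => fun j => decide (j ∈ s))
  · intro c hc
    rw [Finset.mem_coe, Finset.mem_filter] at hc
    rw [Finset.mem_coe, Finset.mem_powersetCard]
    refine ⟨Finset.filter_subset _ _, ?_⟩
    rw [← hc.2, count_ofFn]
  · intro s hs
    rw [Finset.mem_coe, Finset.mem_powersetCard] at hs
    rw [Finset.mem_coe, Finset.mem_filter]
    refine ⟨Finset.mem_univ _, ?_⟩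
    rw [count_ofFn, ← hs.2]
    congr 1
    ext j
    simp
  · intro c hc
    funext j
    simp
  · intro s hs
    ext j
    simp

lemma Zd_formula {μ lam : Fin d → ℤ} (hμ : StrictAnti μ) (k : ℕ)
    (hk : (k : ℤ) = rankW d lam - rankW d μ)
    (W : ℕ → List Bool) (hWL : ∀ n, (W n).count false = n)
    (hWR : ∀ n, (W n).count true = n + k)
    (hcomm : ∀ u v : Fin d → ℤ,
      {t | adjW d u t ∧ rankW d t = rankW d u + 1 ∧
           adjW d t v ∧ rankW d v = rankW d t - 1}.ncard =
      {t | adjW d u t ∧ rankW d t = rankW d u - 1 ∧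
           adjW d t v ∧ rankW d v = rankW d t + 1}.ncard)
    (N n : ℕ) (hN : N = 2 * n + k) :
    Zd d N μ lam = N.choose (n + k) * Zword d (W n) μ lam := by
  classical
  rw [Zd_eq_sum N lam hμ]
  have key : ∀ c : Fin N → Bool, Zp N c μ lam =
      if (List.ofFn c).count true = n + k then Zword d (W n) μ lam else 0 := by
    intro c
    rw [← Zword_ofFn]
    have hlen : (List.ofFn c).length = N := List.length_ofFn
    have hcc := count_add_count (List.ofFn c)
    by_cases hc : (List.ofFn c).count true = n + k
    · rw [if_pos hc]
      refine Zword_perm hcomm ?_ lam μ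
      rw [List.perm_iff_count]
      intro b
      cases b
      · rw [hWL n]
        omega
      · rw [hWR n, hc]
    · rw [if_neg hc]
      by_contra hne
      have hrank := rank_of_Zword_ne_zero lam (List.ofFn c) μ hne
      have hkc : (k : ℤ) = ((List.ofFn c).count true : ℤ) - (List.ofFn c).count false := by
        rw [hk, hrank]
        ring
      have : (List.ofFn c).count true = n + k := by omega
      exact hc this
  rw [Finset.sum_congr rfl (fun c _ => key c), ← Finset.sum_filter,
    Finset.sum_const, smul_eq_mul, card_weight]

lemma Zd_vanish {μ lam : Fin d → ℤ} (hμ : StrictAnti μ) (k : ℕ)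
    (hk : (k : ℤ) = rankW d lam - rankW d μ)
    (N : ℕ) (hbad : ¬(k ≤ N ∧ 2 ∣ (N - k))) : Zd d N μ lam = 0 := by
  rw [Zd_eq_sum N lam hμ]
  apply Finset.sum_eq_zero
  intro c _
  rw [← Zword_ofFn]
  by_contra hne
  have hrank := rank_of_Zword_ne_zero lam (List.ofFn c) μ hne
  have hkc : (k : ℤ) = ((List.ofFn c).count true : ℤ) - (List.ofFn c).count false := by
    rw [hk, hrank]
    ring
  have hlen : (List.ofFn c).length = N := List.length_ofFn
  have hcc := count_add_count (List.ofFn c)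
  exact hbad ⟨by omega, by omega⟩

end S12


/-- let `μ, λ ∈ W_d` with `k = r(λ) − r(μ) ≥ 0`, and for each `n ≥ 0` let
`W n` be any word with `n` letters `L` and `n + k` letters `R`.  Assuming the commutation
of raising and lowering operators on `W_d` and the reflection-principle determinant
formula, `Σ_{n ≥ 0} Z_d(W_n; μ, λ) x^{2n+k}/(n!(n+k)!) = det(I_{λᵢ−μⱼ}(2x))`. -/
theorem stmt12 {d : ℕ} (μ lam : Fin d → ℤ) (hμ : StrictAnti μ) (hlam : StrictAnti lam)
    (k : ℕ) (hk : (k : ℤ) = rankW d lam - rankW d μ)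
    (W : ℕ → List Bool)
    (hWL : ∀ n, (W n).count false = n) (hWR : ∀ n, (W n).count true = n + k)
    (hcomm : ∀ u v : Fin d → ℤ,
      {t | adjW d u t ∧ rankW d t = rankW d u + 1 ∧
           adjW d t v ∧ rankW d v = rankW d t - 1}.ncard =
      {t | adjW d u t ∧ rankW d t = rankW d u - 1 ∧
           adjW d t v ∧ rankW d v = rankW d t + 1}.ncard)
    (hdet : (PowerSeries.mk fun N => (Zd d N μ lam : ℚ) / N.factorial) =
      Matrix.det (Matrix.of fun i j : Fin d => besselI (lam i - μ j))) :
    (PowerSeries.mk fun N =>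
      if k ≤ N ∧ 2 ∣ (N - k) then
        (Zword d (W ((N - k) / 2)) μ lam : ℚ) /
          (((N - k) / 2).factorial * ((N - k) / 2 + k).factorial)
      else 0) =
    Matrix.det (Matrix.of fun i j : Fin d => besselI (lam i - μ j)) := by

  rw [← hdet]
  ext N
  rw [PowerSeries.coeff_mk, PowerSeries.coeff_mk]
  by_cases hcond : k ≤ N ∧ 2 ∣ (N - k)
  · rw [if_pos hcond]
    obtain ⟨h1, h2⟩ := hcond
    set n := (N - k) / 2 with hn
    have hN : N = 2 * n + k := by omega
    rw [S12.Zd_formula hμ k hk W hWL hWR hcomm N n hN]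
    have hle : n + k ≤ N := by omega
    have hsub : N - (n + k) = n := by omega
    rw [Nat.cast_mul, Nat.cast_choose ℚ hle, hsub]
    have f1 : (n.factorial : ℚ) ≠ 0 := Nat.cast_ne_zero.2 (Nat.factorial_ne_zero n)
    have f2 : ((n + k).factorial : ℚ) ≠ 0 := Nat.cast_ne_zero.2 (Nat.factorial_ne_zero _)
    have f3 : (N.factorial : ℚ) ≠ 0 := Nat.cast_ne_zero.2 (Nat.factorial_ne_zero N)
    field_simp
  · rw [if_neg hcond, S12.Zd_vanish hμ k hk N hcond, Nat.cast_zero, zero_div]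
end
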